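/- If a graph G admits a tree-decomposition into finite cliques, then G contains no induced minor isomorphic to 𝓗, the graph obtained from an infinite clique by adding two non-adjacent dominating vertices. -/

import Mathlib

open SimpleGraph

variable {V W : Type*}

/-- `G` contains no induced cycle of length at least four. -/
def IsChordal (G : SimpleGraph V) : Prop :=
  ∀ (n : ℕ), 4 ≤ n → ∀ f : ZMod n → V, Function.Injective f →
    (∀ i j : ZMod n, G.Adj (f i) (f j) ↔ j = i + 1 ∨ i = j + 1) → False

/-- The set of vertices outside `C` having a neighbour in `C`. -/
def nbhdSet (G : SimpleGraph V) (C : Set V) : Set V :=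
  {v | v ∉ C ∧ ∃ u ∈ C, G.Adj u v}

/-- `C` is a connected component of `G - S`. -/
def IsCompOutside (G : SimpleGraph V) (S C : Set V) : Prop :=
  C.Nonempty ∧ Disjoint C S ∧ (G.induce C).Connected ∧
    ∀ u ∈ C, ∀ v, G.Adj u v → v ∉ S → v ∈ C

/-- A strict comb of cliques. -/
def HasStrictCombOfCliques (G : SimpleGraph V) : Prop :=
  ∃ v : ℕ → V, Function.Injective v ∧ (∀ i j, i ≠ j → G.Adj (v i) (v j)) ∧
    ∀ i : ℕ, 0 < i → ∃ w, (∀ j, j < i → G.Adj w (v j)) ∧ (∀ j, i ≤ j → ¬ G.Adj w (v j))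

/-- Every walk from `A` to `B` meets `S`. -/
def Separates (G : SimpleGraph V) (A B S : Set V) : Prop :=
  ∀ a ∈ A, ∀ b ∈ B, ∀ p : G.Walk a b, ∃ x ∈ p.support, x ∈ S

/-- `S` is a minimal `A`–`B` separator. -/
def IsMinimalSeparator (G : SimpleGraph V) (A B S : Set V) : Prop :=
  Separates G A B S ∧ ∀ S' ⊆ S, Separates G A B S' → S' = S

/-- `S` is a minimal `a`–`b` separator (containing neither `a` nor `b`). -/
def IsMinimalVxSeparator (G : SimpleGraph V) (a b : V) (S : Set V) : Prop :=
  a ∉ S ∧ b ∉ S ∧ Separates G {a} {b} S ∧ ∀ S' ⊆ S, Separates G {a} {b} S' → S' = S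

/-- A tree-decomposition of `G` with decomposition tree `T` and bags `bag`. -/
def IsTreeDecomp {ι : Type*} (G : SimpleGraph V) (T : SimpleGraph ι) (bag : ι → Set V) : Prop :=
  T.IsTree ∧ (∀ v, ∃ t, v ∈ bag t) ∧
    (∀ u v, G.Adj u v → ∃ t, u ∈ bag t ∧ v ∈ bag t) ∧
    ∀ v, (T.induce {t | v ∈ bag t}).Connected

/-- `H` is an induced minor of `G`. -/
def IsInducedMinor (H : SimpleGraph W) (G : SimpleGraph V) : Prop :=
  ∃ B : W → Set V, (∀ w, (B w).Nonempty) ∧ (∀ w, (G.induce (B w)).Connected) ∧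
    (Pairwise fun u w => Disjoint (B u) (B w)) ∧
    ∀ u w, u ≠ w → ((∃ x ∈ B u, ∃ y ∈ B w, G.Adj x y) ↔ H.Adj u w)

/-- The graph `𝓗`: a countably infinite clique together with two non-adjacent
dominating vertices. -/
def HGraph : SimpleGraph (ℕ ⊕ Bool) where
  Adj x y := match x, y with
    | .inl i, .inl j => i ≠ j
    | .inl _, .inr _ => True
    | .inr _, .inl _ => True
    | .inr _, .inr _ => False
  symm := ⟨by
    rintro (i | a) (j | b) h <;> simp_all
    all_goals exact fun h' => h h'.symm⟩
  loopless := ⟨by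
    rintro (i | a) h <;> simp_all⟩

/-- `u` lies on the path from `r` to `v` in the tree `T`; this is the tree-order. -/
def TreeLE (T : SimpleGraph V) (r u v : V) : Prop :=
  ∀ p : T.Walk r v, p.IsPath → u ∈ p.support

/-- `T` is a normal spanning tree of `G` with root `r`. -/
def IsNormalSpanningTree (G T : SimpleGraph V) (r : V) : Prop :=
  T ≤ G ∧ T.IsTree ∧ ∀ u v, G.Adj u v → TreeLE T r u v ∨ TreeLE T r v u

universe u

section Helpers
open Walk
variable {α : Type*}

lemma exists_path_in {T : SimpleGraph α} {C : Set α} (hC : (T.induce C).Connected)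
    {u v : α} (hu : u ∈ C) (hv : v ∈ C) :
    ∃ p : T.Walk u v, p.IsPath ∧ ∀ x ∈ p.support, x ∈ C := by
  classical
  obtain ⟨w⟩ := hC ⟨u, hu⟩ ⟨v, hv⟩
  let w' : T.Walk u v := w.map (SimpleGraph.Embedding.induce C).toHom
  refine ⟨w'.toPath, w'.toPath.2, fun x hx => ?_⟩
  have hx' : x ∈ w'.support := w'.support_toPath_subset hx
  rw [show w'.support = w.support.map (SimpleGraph.Embedding.induce C).toHom from
    Walk.support_map _ _] at hx'
  obtain ⟨y, hy, rfl⟩ := List.mem_map.mp hx'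
  exact y.2

lemma support_subset_of_connected {T : SimpleGraph α} (hT : T.IsAcyclic) {C : Set α}
    (hC : (T.induce C).Connected) {u v : α} (hu : u ∈ C) (hv : v ∈ C)
    (p : T.Walk u v) (hp : p.IsPath) : ∀ x ∈ p.support, x ∈ C := by
  obtain ⟨w, hw, hwC⟩ := exists_path_in hC hu hv
  have := hT.path_unique ⟨p, hp⟩ ⟨w, hw⟩
  intro x hx
  apply hwC
  have : p = w := congrArg Subtype.val this
  rwa [← this]

lemma exists_prefix_first {T : SimpleGraph α} {S : Set α} :
    ∀ {r t : α} (q : T.Walk r t), q.IsPath → t ∈ S →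
    ∃ (t' : α), t' ∈ S ∧ ∃ (q' : T.Walk r t'), q'.IsPath ∧
      (∀ x ∈ q'.support, x ∈ q.support) ∧ ∀ x ∈ q'.support, x ∈ S → x = t' := by
  intro r t q
  induction q with
  | nil =>
    intro _ ht
    exact ⟨_, ht, Walk.nil, Walk.IsPath.nil, fun x hx => hx, fun x hx _ => by
      simpa using hx⟩
  | @cons a b c h p ih =>
    intro hp ht
    by_cases ha : a ∈ S
    · refine ⟨a, ha, Walk.nil, Walk.IsPath.nil, fun x hx => ?_, fun x hx _ => by
        simpa using hx⟩
      simp only [Walk.support_nil, List.mem_singleton] at hx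
      subst hx
      exact Walk.start_mem_support _
    · obtain ⟨t', ht', q', hq', hsub, hfirst⟩ := ih hp.of_cons ht
      have hanot : a ∉ p.support := (Walk.cons_isPath_iff h p |>.mp hp).2
      refine ⟨t', ht', Walk.cons h q', ?_, ?_, ?_⟩
      · rw [Walk.cons_isPath_iff]
        exact ⟨hq', fun hc => hanot (hsub a hc)⟩
      · intro x hx
        rw [Walk.support_cons] at hx ⊢
        rcases List.mem_cons.mp hx with hx | hx
        · simp [hx]
        · exact List.mem_cons_of_mem _ (hsub x hx)
      · intro x hx hxS
        rw [Walk.support_cons] at hx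
        rcases List.mem_cons.mp hx with hx | hx
        · exact absurd (hx ▸ hxS) ha
        · exact hfirst x hx hxS

lemma core_sep {T : SimpleGraph α} (hT : T.IsTree) {SA SB : Set α}
    (hAB : ∀ x, x ∈ SA → x ∈ SB → False)
    (hSA : (T.induce SA).Connected) (hSB : (T.induce SB).Connected)
    {s r tB : α} (hs : s ∈ SA) (hsr : T.Adj s r) (q : T.Walk r tB) (hq : q.IsPath)
    (htB : tB ∈ SB) (hqA : ∀ x ∈ q.support, x ∉ SA) :
    ∀ x ∈ SA, ∀ y ∈ SB, ∀ (w : T.Walk x y), w.IsPath → s ∈ w.support := by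
  intro x hx y hy w hw
  obtain ⟨tB', htB', q', hq', hsub, hfirst⟩ := exists_prefix_first q hq htB
  obtain ⟨P1, hP1, hP1C⟩ := exists_path_in hSA hx hs
  obtain ⟨P3, hP3, hP3C⟩ := exists_path_in hSB htB' hy
  set W : T.Walk x y := P1.append (Walk.cons hsr (q'.append P3)) with hWdef
  have hP3tail : tB' ∉ P3.support.tail := by
    have := P3.isPath_def.mp hP3
    rw [P3.support_eq_cons] at this
    exact (List.nodup_cons.mp this).1
  have hWsupp : W.support = P1.support ++ (q'.support ++ P3.support.tail) := by
    rw [hWdef, Walk.support_append, Walk.support_cons, List.tail_cons, Walk.support_append]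
  have hWpath : W.IsPath := by
    rw [Walk.isPath_def, hWsupp]
    refine List.Nodup.append (P1.isPath_def.mp hP1) (List.Nodup.append (q'.isPath_def.mp hq')
      ?_ ?_) ?_
    · have := P3.isPath_def.mp hP3
      rw [P3.support_eq_cons] at this
      exact (List.nodup_cons.mp this).2
    · intro z hz1 hz2
      have hzSB : z ∈ SB := hP3C z (List.tail_subset _ hz2)
      have := hfirst z hz1 hzSB
      exact hP3tail (this ▸ hz2)
    · intro z hz1 hz2
      have hzSA : z ∈ SA := hP1C z hz1
      rcases List.mem_append.mp hz2 with hz2 | hz2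
      · exact hqA z (hsub z hz2) hzSA
      · exact hAB z hzSA (hP3C z (List.tail_subset _ hz2))
  have huniq : (⟨w, hw⟩ : T.Path x y) = ⟨W, hWpath⟩ := hT.IsAcyclic.path_unique _ _
  have : w = W := congrArg Subtype.val huniq
  rw [this, hWsupp]
  exact List.mem_append.mpr (Or.inl (P1.end_mem_support))

lemma last_exit {T : SimpleGraph α} (hT : T.IsTree) {SA : Set α}
    (hSA : (T.induce SA).Connected) {tB : α} (htB : tB ∉ SA) :
    ∀ {a : α} (p : T.Walk a tB), p.IsPath → a ∈ SA →
    ∃ (s r : α) (_ : T.Adj s r) (q : T.Walk r tB), s ∈ SA ∧ q.IsPath ∧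
      (∀ x ∈ q.support, x ∉ SA) := by
  classical
  intro a p
  have main : ∀ {a tB' : α} (p : T.Walk a tB'), p.IsPath → a ∈ SA → tB' ∉ SA →
      ∃ (s r : α) (_ : T.Adj s r) (q : T.Walk r tB'), s ∈ SA ∧ q.IsPath ∧
        (∀ x ∈ q.support, x ∉ SA) := by
    intro a tB' p
    induction p with
    | nil => intro _ ha htB'; exact absurd ha htB'
    | @cons a b c h p ih =>
      intro hp ha htB'
      by_cases hb : b ∈ SA
      · exact ih hp.of_cons hb htB'
      · refine ⟨a, b, h, p, ha, hp.of_cons, ?_⟩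
        intro z hz hzSA
        have hp' : (Walk.cons h (p.takeUntil z hz)).IsPath := by
          rw [Walk.cons_isPath_iff]
          exact ⟨hp.of_cons.takeUntil hz, fun hc =>
            (Walk.cons_isPath_iff h p |>.mp hp).2 ((p.support_takeUntil_subset hz) hc)⟩
        have hrin : b ∈ (Walk.cons h (p.takeUntil z hz)).support := by
          rw [Walk.support_cons]
          exact List.mem_cons_of_mem _ (Walk.start_mem_support _)
        exact hb (support_subset_of_connected hT.IsAcyclic hSA ha hzSA _ hp' b hrin)
  intro hp ha
  exact main p hp ha htB

lemma tree_sep {T : SimpleGraph α} (hT : T.IsTree) {SA SB : Set α}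
    (hAB : ∀ x, x ∈ SA → x ∈ SB → False)
    (hSA : (T.induce SA).Connected) (hSB : (T.induce SB).Connected)
    (hA : SA.Nonempty) (hB : SB.Nonempty) :
    ∃ s, ∀ (C : Set α), (T.induce C).Connected →
      (C ∩ SA).Nonempty → (C ∩ SB).Nonempty → s ∈ C := by
  classical
  obtain ⟨tA, htA⟩ := hA
  obtain ⟨tB, htB⟩ := hB
  obtain ⟨w0⟩ := hT.isConnected.preconnected tA tB
  have htBA : tB ∉ SA := fun hc => hAB tB hc htB
  obtain ⟨s, r, hsr, q, hs, hq, hqA⟩ :=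
    last_exit hT hSA htBA (w0.toPath : T.Walk tA tB) w0.toPath.2 htA
  refine ⟨s, fun C hC ⟨x, hxC, hxA⟩ ⟨y, hyC, hyB⟩ => ?_⟩
  obtain ⟨w, hw, hwC⟩ := exists_path_in hC hxC hyC
  exact hwC s (core_sep hT hAB hSA hSB hs hsr q hq htB hqA x hxA y hyB w hw)

lemma td_subtree_connected {V ι : Type*} (G : SimpleGraph V) (T : SimpleGraph ι)
    (bag : ι → Set V) (htd : IsTreeDecomp G T bag) (X : Set V)
    (hXne : X.Nonempty) (hXc : (G.induce X).Connected) :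
    (T.induce {t | ∃ v ∈ X, v ∈ bag t}).Connected := by
  obtain ⟨hTree, hcover, hedge, hconn⟩ := htd
  set S : Set ι := {t | ∃ v ∈ X, v ∈ bag t} with hS
  have vertex_reach : ∀ (v : V) (hv : v ∈ X) (t1 t2 : ι) (h1 : v ∈ bag t1) (h2 : v ∈ bag t2),
      (T.induce S).Reachable ⟨t1, ⟨v, hv, h1⟩⟩ ⟨t2, ⟨v, hv, h2⟩⟩ := by
    intro v hv t1 t2 h1 h2
    have sub : {t | v ∈ bag t} ⊆ S := fun t ht => ⟨v, hv, ht⟩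
    have hr := (hconn v).preconnected ⟨t1, h1⟩ ⟨t2, h2⟩
    exact hr.map (T.induceHomOfLE sub).toHom
  rw [connected_iff]
  refine ⟨?_, ?_⟩
  swap
  · obtain ⟨v, hv⟩ := hXne
    obtain ⟨t, ht⟩ := hcover v
    exact ⟨⟨t, v, hv, ht⟩⟩
  rintro ⟨t1, ht1⟩ ⟨t2, ht2⟩
  obtain ⟨v1, hv1, hb1⟩ := ht1
  obtain ⟨v2, hv2, hb2⟩ := ht2
  have key : ∀ (a b : ↥X) (w : (G.induce X).Walk a b) (t1 t2 : ι)
      (h1 : a.1 ∈ bag t1) (h2 : b.1 ∈ bag t2),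
      (T.induce S).Reachable ⟨t1, ⟨a.1, a.2, h1⟩⟩ ⟨t2, ⟨b.1, b.2, h2⟩⟩ := by
    intro a b w
    induction w with
    | nil => intro t1 t2 h1 h2; exact vertex_reach _ (Subtype.coe_prop _) _ _ h1 h2
    | @cons a c b hadj w ih =>
      intro t1 t2 h1 h2
      have hGadj : G.Adj a.1 c.1 := hadj
      obtain ⟨t, hat, hct⟩ := hedge a.1 c.1 hGadj
      exact (vertex_reach a.1 a.2 t1 t h1 hat).trans (ih t t2 hct h2)
  exact key ⟨v1, hv1⟩ ⟨v2, hv2⟩ (hXc.preconnected ⟨v1, hv1⟩ ⟨v2, hv2⟩).some t1 t2 hb1 hb2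

end Helpers

theorem stmt12 {V : Type u} {ι : Type*} (G : SimpleGraph V) (T : SimpleGraph ι)
    (bag : ι → Set V) (htd : IsTreeDecomp G T bag)
    (hfin : ∀ t, (bag t).Finite ∧ G.IsClique (bag t)) :
    ¬ IsInducedMinor HGraph G := by
  classical
  rintro ⟨B, hne, hconnB, hdisj, hadj⟩
  set SA : Set ι := {t | ∃ v ∈ B (Sum.inr true), v ∈ bag t} with hSAdef
  set SB : Set ι := {t | ∃ v ∈ B (Sum.inr false), v ∈ bag t} with hSBdef
  have hAB : ∀ t, t ∈ SA → t ∈ SB → False := by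
    rintro t ⟨a, ha, hat⟩ ⟨b, hb, hbt⟩
    have hd : Disjoint (B (Sum.inr true)) (B (Sum.inr false)) :=
      hdisj (by simp : (Sum.inr true : ℕ ⊕ Bool) ≠ Sum.inr false)
    have hne' : a ≠ b := by
      rintro rfl
      exact Set.disjoint_left.mp hd ha hb
    have hGadj : G.Adj a b := (hfin t).2 hat hbt hne'
    have hfalse : HGraph.Adj (Sum.inr true) (Sum.inr false) :=
      (hadj (Sum.inr true) (Sum.inr false) (by simp)).mp ⟨a, ha, b, hb, hGadj⟩
    exact hfalse
  have hSAc : (T.induce SA).Connected :=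
    td_subtree_connected G T bag htd _ (hne _) (hconnB (Sum.inr true))
  have hSBc : (T.induce SB).Connected :=
    td_subtree_connected G T bag htd _ (hne _) (hconnB (Sum.inr false))
  have hSAne : SA.Nonempty := by
    obtain ⟨v, hv⟩ := hne (Sum.inr true)
    obtain ⟨t, ht⟩ := htd.2.1 v
    exact ⟨t, v, hv, ht⟩
  have hSBne : SB.Nonempty := by
    obtain ⟨v, hv⟩ := hne (Sum.inr false)
    obtain ⟨t, ht⟩ := htd.2.1 v
    exact ⟨t, v, hv, ht⟩
  obtain ⟨s, hsep⟩ := tree_sep htd.1 hAB hSAc hSBc hSAne hSBne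
  have hmeet : ∀ i : ℕ, ∃ v ∈ B (Sum.inl i), v ∈ bag s := by
    intro i
    have hC := td_subtree_connected G T bag htd _ (hne (Sum.inl i)) (hconnB (Sum.inl i))
    have h1 : ({t | ∃ v ∈ B (Sum.inl i), v ∈ bag t} ∩ SA).Nonempty := by
      have hH : HGraph.Adj (Sum.inl i) (Sum.inr true) := trivial
      obtain ⟨x, hx, y, hy, hxy⟩ := (hadj (Sum.inl i) (Sum.inr true) (by simp)).mpr hH
      obtain ⟨t, hxt, hyt⟩ := htd.2.2.1 x y hxy
      exact ⟨t, ⟨x, hx, hxt⟩, ⟨y, hy, hyt⟩⟩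
    have h2 : ({t | ∃ v ∈ B (Sum.inl i), v ∈ bag t} ∩ SB).Nonempty := by
      have hH : HGraph.Adj (Sum.inl i) (Sum.inr false) := trivial
      obtain ⟨x, hx, y, hy, hxy⟩ := (hadj (Sum.inl i) (Sum.inr false) (by simp)).mpr hH
      obtain ⟨t, hxt, hyt⟩ := htd.2.2.1 x y hxy
      exact ⟨t, ⟨x, hx, hxt⟩, ⟨y, hy, hyt⟩⟩
    exact hsep _ hC h1 h2
  choose f hf1 hf2 using hmeet
  have hinj : Function.Injective f := by
    intro i j hij
    by_contra hne'
    have hd : Disjoint (B (Sum.inl i)) (B (Sum.inl j)) :=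
      hdisj (by simpa using hne' : (Sum.inl i : ℕ ⊕ Bool) ≠ Sum.inl j)
    exact Set.disjoint_left.mp hd (hf1 i) (hij ▸ hf1 j)
  exact (hfin s).1.not_infinite (Set.infinite_of_injective_forall_mem hinj hf2)
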